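/- arXiv:1511.06638 — 2 statements merged into one kernel-verified Lean document; each statement's English description precedes it below -/
import Mathlib

section
/- Let (P_t)_{t>0} be a sub-Markovian strongly Feller semigroup on ℝ^d with P_t f → f uniformly as t → 0 for f ∈ C_0(ℝ^d), and let G be its potential operator. If for some nonnegative continuous compactly supported function f and points x ≠ y, λ > 0, we have Gf finite everywhere, then there exists a nonnegative Borel function φ with Gφ(x) ≠ λ Gφ(y); i.e., the family {Gφ : φ ∈ B⁺(ℝ^d)} is linearly separating. -/
open MeasureTheory Set Filter

/-- for a sub-Markovian strongly Feller semigroup `(P_t)` on ℝ^d with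
`P_t f → f` uniformly as `t → 0⁺` for `f ∈ C_0`, whose potential `G f = ∫_0^∞ P_t f dt` is
finite on nonnegative continuous compactly supported functions, the family
`{Gφ : φ ∈ B⁺(ℝ^d)}` is linearly separating: for all `x ≠ y` and `λ > 0` there is a
nonnegative Borel `φ` with `Gφ(x) ≠ λ Gφ(y)`. -/
theorem stmt7 {d : ℕ}
    (P : ℝ → (EuclideanSpace ℝ (Fin d) → ℝ) → (EuclideanSpace ℝ (Fin d) → ℝ))
    (G : (EuclideanSpace ℝ (Fin d) → ℝ) → (EuclideanSpace ℝ (Fin d) → ℝ))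
    (hG : ∀ f x, G f x = ∫ t in Ioi (0 : ℝ), P t f x)
    (hsemi : ∀ t > (0:ℝ), ∀ s > (0:ℝ), ∀ f, P t (P s f) = P (t + s) f)
    (hpos : ∀ t > (0:ℝ), ∀ f g, f ≤ g → P t f ≤ P t g)
    (hsubmarkov : ∀ t > (0:ℝ), ∀ f, (∀ z, 0 ≤ f z) → ∀ c : ℝ, (∀ z, f z ≤ c) →
      ∀ z, P t f z ≤ c)
    (hfeller : ∀ t > (0:ℝ), ∀ f, Measurable f → (∃ c : ℝ, ∀ z, |f z| ≤ c) →
      Continuous (P t f))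
    (hstrongcont : ∀ f : EuclideanSpace ℝ (Fin d) → ℝ, Continuous f → HasCompactSupport f →
      TendstoUniformly (fun t z => P t f z) f (nhdsWithin 0 (Ioi 0)))
    (hGfin : ∀ f : EuclideanSpace ℝ (Fin d) → ℝ, Continuous f → HasCompactSupport f →
      (∀ z, 0 ≤ f z) → ∀ z, IntegrableOn (fun t => P t f z) (Ioi (0:ℝ)))
    (x y : EuclideanSpace ℝ (Fin d)) (hxy : x ≠ y) (lam : ℝ) (hlam : 0 < lam) :
    ∃ φ : EuclideanSpace ℝ (Fin d) → ℝ, Measurable φ ∧ (∀ z, 0 ≤ φ z) ∧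
      G φ x ≠ lam * G φ y := by
  classical
  -- Step 0: P t 0 = 0, hence P preserves nonnegativity.
  set Z : EuclideanSpace ℝ (Fin d) → ℝ := fun _ => 0 with hZdef
  have hZcont : Continuous Z := continuous_const
  have hZsupp : HasCompactSupport Z := by
    rw [hZdef]
    exact HasCompactSupport.intro (isCompact_singleton (x := x)) (fun z _ => rfl)
  have hZnonneg : ∀ z, 0 ≤ Z z := fun _ => le_refl 0
  have hZle : ∀ t > (0:ℝ), ∀ z, P t Z z ≤ 0 := fun t ht z =>
    hsubmarkov t ht Z hZnonneg 0 (fun _ => le_refl 0) z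
  have hZanti : ∀ s > (0:ℝ), ∀ t, s < t → ∀ z, P t Z z ≤ P s Z z := by
    intro s hs t hst z
    have h1 : P s (P (t - s) Z) = P t Z := by
      have := hsemi s hs (t - s) (by linarith) Z
      rwa [add_sub_cancel] at this
    rw [← h1]
    exact hpos s hs _ Z (fun w => hZle (t - s) (by linarith) w) z
  have hZzero : ∀ t > (0:ℝ), ∀ z, P t Z z = 0 := by
    intro t ht z
    by_contra hne
    have hneg : P t Z z < 0 := lt_of_le_of_ne (hZle t ht z) hne
    have hint : IntegrableOn (fun s => P s Z z) (Ioi (0:ℝ)) :=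
      hGfin Z hZcont hZsupp hZnonneg z
    have hint2 : IntegrableOn (fun s => P s Z z) (Ioi t) :=
      hint.mono_set (Ioi_subset_Ioi ht.le)
    have hfin : (volume.restrict (Ioi t)) {s : ℝ | P s Z z ≤ P t Z z} < ⊤ :=
      hint2.measure_le_lt_top hneg
    have hsub : Ioi t ⊆ {s : ℝ | P s Z z ≤ P t Z z} := fun s hs =>
      (hZanti t ht s hs z)
    have : (volume.restrict (Ioi t)) (Ioi t) = ⊤ := by
      rw [Measure.restrict_apply_self, Real.volume_Ioi]
    exact absurd (lt_of_le_of_lt (by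
      rw [← this]
      exact measure_mono hsub) hfin) (lt_irrefl _)
  have hPnonneg : ∀ t > (0:ℝ), ∀ g : EuclideanSpace ℝ (Fin d) → ℝ,
      (∀ z, 0 ≤ g z) → ∀ z, 0 ≤ P t g z := by
    intro t ht g hg z
    have := hpos t ht Z g (fun w => hg w) z
    rwa [hZzero t ht z] at this
  -- Step 1: a bump function f with f x = 1, f y = 0.
  set r : ℝ := dist x y with hrdef
  have hr : 0 < r := dist_pos.mpr hxy
  set f : EuclideanSpace ℝ (Fin d) → ℝ := fun z => max (1 - dist z x / r) 0 with hfdef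
  have hfcont : Continuous f := by
    apply Continuous.max _ continuous_const
    exact continuous_const.sub ((continuous_id.dist continuous_const).div_const r)
  have hfnonneg : ∀ z, 0 ≤ f z := fun z => le_max_right _ _
  have hfle : ∀ z, f z ≤ 1 := by
    intro z
    apply max_le _ zero_le_one
    have : 0 ≤ dist z x / r := div_nonneg dist_nonneg hr.le
    linarith
  have hfsupp : HasCompactSupport f := by
    apply HasCompactSupport.intro (isCompact_closedBall x r)
    intro z hz
    have hd : r < dist z x := by
      simpa [Metric.closedBall, dist_comm] using hz
    have : 1 - dist z x / r ≤ 0 := by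
      have : 1 < dist z x / r := (one_lt_div hr).mpr hd
      linarith
    simp [hfdef, max_eq_right this]
  have hfx : f x = 1 := by simp [hfdef]
  have hfy : f y = 0 := by
    simp [hfdef, dist_comm y x, ← hrdef, div_self hr.ne']
  have hfmeas : Measurable f := hfcont.measurable
  -- integrability of the orbits
  have hIx : IntegrableOn (fun t => P t f x) (Ioi (0:ℝ)) := hGfin f hfcont hfsupp hfnonneg x
  have hIy : IntegrableOn (fun t => P t f y) (Ioi (0:ℝ)) := hGfin f hfcont hfsupp hfnonneg y
  set u : ℝ → ℝ := fun t => P t f x - lam * P t f y with hudef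
  have hu_int : IntegrableOn u (Ioi (0:ℝ)) := hIx.sub (hIy.const_mul lam)
  by_cases hcase : G f x = lam * G f y
  · -- main case: use φ = P t₀ f for small t₀
    have hu0 : ∫ t in Ioi (0:ℝ), u t = 0 := by
      rw [hudef]
      rw [integral_sub hIx (hIy.const_mul lam), integral_const_mul]
      rw [← hG, ← hG, hcase]
      ring
    -- uniform convergence near 0
    have hTU := hstrongcont f hfcont hfsupp
    rw [Metric.tendstoUniformly_iff] at hTU
    set ε : ℝ := 1 / (2 * (1 + lam)) with hεdef
    have hε : 0 < ε := by positivity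
    have hev := hTU ε hε
    rw [eventually_nhdsWithin_iff, Metric.eventually_nhds_iff] at hev
    obtain ⟨η, hη, hηp⟩ := hev
    set t₀ : ℝ := η / 2 with ht₀def
    have ht₀ : 0 < t₀ := by positivity
    have hsmall : ∀ s, 0 < s → s ≤ t₀ → ∀ z, dist (f z) (P s f z) < ε := by
      intro s hs hst z
      exact hηp (by
        rw [Real.dist_eq, sub_zero, abs_of_pos hs]; linarith) hs z
    -- lower bound for u on (0, t₀]
    have hu_lb : ∀ s ∈ Ioc (0:ℝ) t₀, (1:ℝ)/2 ≤ u s := by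
      intro s hs
      have h1 := hsmall s hs.1 hs.2 x
      have h2 := hsmall s hs.1 hs.2 y
      rw [Real.dist_eq, hfx] at h1
      rw [Real.dist_eq, hfy] at h2
      have hax : 1 - ε < P s f x := by
        have := abs_lt.mp h1
        linarith [this.2]
      have hay : P s f y < ε := by
        have := abs_lt.mp h2
        linarith [this.1]
      have hεb : (1 + lam) * ε = 1/2 := by
        rw [hεdef]; field_simp
      have : u s ≥ 1 - ε - lam * ε := by
        rw [hudef]
        have : lam * P s f y ≤ lam * ε := le_of_lt (by
          exact (mul_lt_mul_iff_right₀ hlam).mpr hay)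
        simp only
        linarith
      nlinarith
    -- ∫ over Ioc 0 t₀ is ≥ t₀/2 > 0
    have hu_int1 : IntegrableOn u (Ioc 0 t₀) := hu_int.mono_set Ioc_subset_Ioi_self
    have hu_int2 : IntegrableOn u (Ioi t₀) := hu_int.mono_set (Ioi_subset_Ioi ht₀.le)
    have hIoc_pos : 0 < ∫ s in Ioc (0:ℝ) t₀, u s := by
      have hconst : ∫ s in Ioc (0:ℝ) t₀, (1:ℝ)/2 = t₀ * (1/2) := by
        rw [setIntegral_const, measureReal_def, Real.volume_Ioc]
        rw [ENNReal.toReal_ofReal (by linarith), smul_eq_mul]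
        ring
      have hmono : ∫ s in Ioc (0:ℝ) t₀, (1:ℝ)/2 ≤ ∫ s in Ioc (0:ℝ) t₀, u s := by
        apply setIntegral_mono_on ((integrableOn_const_iff).mpr (Or.inr (by
          rw [Real.volume_Ioc]; exact ENNReal.ofReal_lt_top))) hu_int1 measurableSet_Ioc
        exact hu_lb
      calc (0:ℝ) < t₀ * (1/2) := by positivity
        _ = _ := hconst.symm
        _ ≤ _ := hmono
    -- splitting
    have hsplit : (∫ s in Ioc (0:ℝ) t₀, u s) + ∫ s in Ioi t₀, u s = 0 := by
      rw [← setIntegral_union (Ioc_disjoint_Ioi le_rfl) measurableSet_Ioi hu_int1 hu_int2,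
        Ioc_union_Ioi_eq_Ioi ht₀.le, hu0]
    have htail : ∫ s in Ioi t₀, u s < 0 := by linarith
    -- the candidate φ
    refine ⟨P t₀ f, ?_, ?_, ?_⟩
    · exact (hfeller t₀ ht₀ f hfmeas ⟨1, fun z => by
        rw [abs_of_nonneg (hfnonneg z)]; exact hfle z⟩).measurable
    · exact hPnonneg t₀ ht₀ f hfnonneg
    · -- compute G (P t₀ f) z = ∫ s in Ioi t₀, P s f z
      have hshift : ∀ z, G (P t₀ f) z = ∫ s in Ioi t₀, P s f z := by
        intro z
        rw [hG]
        have h1 : ∫ t in Ioi (0:ℝ), P t (P t₀ f) z = ∫ t in Ioi (0:ℝ), P (t + t₀) f z := by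
          apply setIntegral_congr_fun measurableSet_Ioi
          intro t ht
          show P t (P t₀ f) z = P (t + t₀) f z
          rw [hsemi t ht t₀ ht₀ f]
        rw [h1]
        have h2 := (measurePreserving_add_right volume t₀).setIntegral_preimage_emb
          (measurableEmbedding_addRight t₀) (fun s => P s f z) (Ioi t₀)
        rw [show (· + t₀) ⁻¹' (Ioi t₀) = Ioi (0:ℝ) from by ext s; simp] at h2
        exact h2
      have hIx2 : IntegrableOn (fun t => P t f x) (Ioi t₀) :=
        hIx.mono_set (Ioi_subset_Ioi ht₀.le)
      have hIy2 : IntegrableOn (fun t => P t f y) (Ioi t₀) :=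
        hIy.mono_set (Ioi_subset_Ioi ht₀.le)
      have hdiff : G (P t₀ f) x - lam * G (P t₀ f) y = ∫ s in Ioi t₀, u s := by
        rw [hshift x, hshift y, hudef]
        rw [integral_sub hIx2 (hIy2.const_mul lam), integral_const_mul]
      intro hEq
      rw [hEq] at hdiff
      simp at hdiff
      rw [← hdiff] at htail
      exact lt_irrefl _ htail
  · exact ⟨f, hfmeas, hfnonneg, hcase⟩
end

section
/- For the Dunkl heat kernel p_t^k one has 0 ≤ p_t^k(x,y) ≤ (2/(d_k (4t)^{λ+1} Γ(λ+1))) exp(−(|x|−|y|)²/(4t)): the Gaussian off-diagonal bound in terms of the difference of norms. -/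
open MeasureTheory Real Set
open scoped RealInnerProductSpace

/-- Gaussian off-diagonal bound for the Dunkl heat kernel:
`0 ≤ p_t^k(x,y) ≤ (2/(d_k (4t)^{λ+1} Γ(λ+1))) exp(-(|x|-|y|)²/(4t))`. -/
theorem stmt12 {d : ℕ} (lam dk t : ℝ) (hlam : 0 < lam) (hdk : 0 < dk) (ht : 0 < t)
    (W : Subgroup (EuclideanSpace ℝ (Fin d) ≃ₗᵢ[ℝ] EuclideanSpace ℝ (Fin d))) [Finite W]
    (x y : EuclideanSpace ℝ (Fin d))
    (μ : Measure (EuclideanSpace ℝ (Fin d))) [IsProbabilityMeasure μ]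
    (hsupp : ∀ᵐ ξ ∂μ, ξ ∈ convexHull ℝ
      (Set.range fun w : W => (w : EuclideanSpace ℝ (Fin d) ≃ₗᵢ[ℝ] EuclideanSpace ℝ (Fin d)) y))
    (p : ℝ)
    (hp : p = 2 / (dk * (4 * t) ^ (lam + 1) * Gamma (lam + 1)) *
      ∫ ξ, exp (-(‖x‖ ^ 2 + ‖y‖ ^ 2 - 2 * ⟪x, ξ⟫) / (4 * t)) ∂μ) :
    0 ≤ p ∧
      p ≤ 2 / (dk * (4 * t) ^ (lam + 1) * Gamma (lam + 1)) *
        exp (-(‖x‖ - ‖y‖) ^ 2 / (4 * t)) := by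
  have hc : 0 < 2 / (dk * (4 * t) ^ (lam + 1) * Gamma (lam + 1)) := by
    apply div_pos two_pos
    have h1 : (0:ℝ) < (4 * t) ^ (lam + 1) := Real.rpow_pos_of_pos (by linarith) _
    have h2 : 0 < Gamma (lam + 1) := Real.Gamma_pos_of_pos (by linarith)
    positivity
  -- pointwise bound on the exponent, a.e.
  have hpt : ∀ᵐ ξ ∂μ, exp (-(‖x‖ ^ 2 + ‖y‖ ^ 2 - 2 * ⟪x, ξ⟫) / (4 * t)) ≤
      exp (-(‖x‖ - ‖y‖) ^ 2 / (4 * t)) := by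
    filter_upwards [hsupp] with ξ hξ
    have hnorm : ‖ξ‖ ≤ ‖y‖ := by
      have hsub : (Set.range fun w : W =>
          (w : EuclideanSpace ℝ (Fin d) ≃ₗᵢ[ℝ] EuclideanSpace ℝ (Fin d)) y) ⊆
          Metric.closedBall (0 : EuclideanSpace ℝ (Fin d)) ‖y‖ := by
        rintro _ ⟨w, rfl⟩
        simp [Metric.mem_closedBall, dist_zero_right,
          (w : EuclideanSpace ℝ (Fin d) ≃ₗᵢ[ℝ] EuclideanSpace ℝ (Fin d)).norm_map]
      have := convexHull_min hsub (convex_closedBall _ _) hξ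
      simpa [Metric.mem_closedBall, dist_zero_right] using this
    have hinner : ⟪x, ξ⟫ ≤ ‖x‖ * ‖y‖ :=
      le_trans (real_inner_le_norm x ξ) (by
        have := mul_le_mul_of_nonneg_left hnorm (norm_nonneg x); linarith)
    apply Real.exp_le_exp.2
    have h4 : (0:ℝ) ≤ 4 * t := by linarith
    gcongr ?_ / (4 * t)
    nlinarith [sq_nonneg (‖x‖ - ‖y‖)]
  have hmeas : AEStronglyMeasurable
      (fun ξ => exp (-(‖x‖ ^ 2 + ‖y‖ ^ 2 - 2 * ⟪x, ξ⟫) / (4 * t))) μ := by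
    apply Continuous.aestronglyMeasurable
    have hcont1 : Continuous fun ξ : EuclideanSpace ℝ (Fin d) => ⟪x, ξ⟫ :=
      (innerSL ℝ x).continuous
    exact Real.continuous_exp.comp
      (((continuous_const.sub (continuous_const.mul hcont1)).neg).div_const _)
  have hint : Integrable
      (fun ξ => exp (-(‖x‖ ^ 2 + ‖y‖ ^ 2 - 2 * ⟪x, ξ⟫) / (4 * t))) μ := by
    refine (integrable_const (exp (-(‖x‖ - ‖y‖) ^ 2 / (4 * t)))).mono' hmeas ?_
    filter_upwards [hpt] with ξ h
    rw [Real.norm_eq_abs, abs_of_pos (Real.exp_pos _)]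
    exact h
  have hI : ∫ ξ, exp (-(‖x‖ ^ 2 + ‖y‖ ^ 2 - 2 * ⟪x, ξ⟫) / (4 * t)) ∂μ ≤
      exp (-(‖x‖ - ‖y‖) ^ 2 / (4 * t)) := by
    calc ∫ ξ, exp (-(‖x‖ ^ 2 + ‖y‖ ^ 2 - 2 * ⟪x, ξ⟫) / (4 * t)) ∂μ
        ≤ ∫ _ξ, exp (-(‖x‖ - ‖y‖) ^ 2 / (4 * t)) ∂μ :=
          integral_mono_ae hint (integrable_const _) hpt
      _ = exp (-(‖x‖ - ‖y‖) ^ 2 / (4 * t)) := by simp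
  constructor
  · rw [hp]
    exact mul_nonneg hc.le (integral_nonneg fun ξ => (Real.exp_pos _).le)
  · rw [hp]
    exact mul_le_mul_of_nonneg_left hI hc.le
end
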